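/- Define Laurent polynomials over ℚ by ξ₁ = 1 − 1/(xy), ξ₂ = 1/(xy) − 3 + x + y, and ξ_{m+2} = (x−1)ξ_{m+1} + x(y−1)²ξ_m. Then for every m ≥ 1, ξ_m vanishes to order at least m at (1,1). -/

import Mathlib

noncomputable section

/-- Laurent polynomials in two variables over `K`. -/
abbrev LP (K : Type*) [Field K] := AddMonoidAlgebra K (ℤ × ℤ)

/-- Embedding of lattice points into the real plane. -/
def toR : ℤ × ℤ → ℝ × ℝ := fun p => ((p.1 : ℝ), (p.2 : ℝ))

/-- The Newton polytope of a Laurent polynomial: convex hull of its exponent vectors. -/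
def newtonPolytope {K : Type*} [Field K] (f : LP K) : Set (ℝ × ℝ) :=
  convexHull ℝ (toR '' (f.coeff.support : Set (ℤ × ℤ)))

/-- The variable `x`. -/
def Xv (K : Type*) [Field K] : LP K := AddMonoidAlgebra.single ((1 : ℤ), (0 : ℤ)) 1

/-- The variable `y`. -/
def Yv (K : Type*) [Field K] : LP K := AddMonoidAlgebra.single ((0 : ℤ), (1 : ℤ)) 1

/-- The maximal ideal of the point `(1,1)` of the torus, generated by `x - 1` and `y - 1`.
A Laurent polynomial vanishes to order at least `m` at `(1,1)` iff it lies in the `m`-th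
power of this ideal. -/
def ptIdeal (K : Type*) [Field K] : Ideal (LP K) :=
  Ideal.span {Xv K - 1, Yv K - 1}

/-- The Laurent polynomial `ξ₁ = 1 - 1/(xy)`. -/
def xiOne (K : Type*) [Field K] : LP K :=
  1 - AddMonoidAlgebra.single ((-1 : ℤ), (-1 : ℤ)) 1

/-- The Laurent polynomial `ξ₂ = 1/(xy) - 3 + x + y`. -/
def xiTwo (K : Type*) [Field K] : LP K :=
  AddMonoidAlgebra.single ((-1 : ℤ), (-1 : ℤ)) 1 - 3 + Xv K + Yv K

/-- The sequence `ξ₁ = 1 − 1/(xy)`, `ξ₂ = 1/(xy) − 3 + x + y`,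
`ξ_{m+2} = (x−1)ξ_{m+1} + x(y−1)²ξ_m`, indexed here so that `xiB m = ξ_{m+1}`. -/
def xiB : ℕ → LP ℚ
  | 0 => xiOne ℚ
  | 1 => xiTwo ℚ
  | n + 2 => (Xv ℚ - 1) * xiB (n + 1) + Xv ℚ * (Yv ℚ - 1) ^ 2 * xiB n

lemma hu_aux : AddMonoidAlgebra.single ((-1 : ℤ), (-1 : ℤ)) (1 : ℚ) * (Xv ℚ * Yv ℚ) = 1 := by
  have h1 : Xv ℚ * Yv ℚ = AddMonoidAlgebra.single ((1 : ℤ), (1 : ℤ)) 1 := by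
    unfold Xv Yv
    rw [AddMonoidAlgebra.single_mul_single]
    norm_num
  have e : ((-1 : ℤ), (-1 : ℤ)) + ((1 : ℤ), (1 : ℤ)) = 0 := by simp [Prod.ext_iff]
  rw [h1, AddMonoidAlgebra.single_mul_single, e, AddMonoidAlgebra.one_def]
  norm_num

lemma hX_mem : Xv ℚ - 1 ∈ ptIdeal ℚ :=
  Ideal.subset_span (Set.mem_insert _ _)

lemma hY_mem : Yv ℚ - 1 ∈ ptIdeal ℚ :=
  Ideal.subset_span (Set.mem_insert_of_mem _ rfl)

lemma mem_sq {p q : LP ℚ} (hp : p ∈ ptIdeal ℚ) (hq : q ∈ ptIdeal ℚ) :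
    p * q ∈ ptIdeal ℚ ^ 2 := by
  rw [show (2 : ℕ) = 1 + 1 from rfl, pow_add, pow_one]
  exact Ideal.mul_mem_mul hp hq

lemma xiOne_mem : xiOne ℚ ∈ ptIdeal ℚ := by
  set u := AddMonoidAlgebra.single ((-1 : ℤ), (-1 : ℤ)) (1 : ℚ) with hu_def
  have key : xiOne ℚ = u * (Xv ℚ * (Yv ℚ - 1) + (Xv ℚ - 1)) := by
    unfold xiOne
    rw [← hu_def]
    linear_combination -hu_aux
  rw [key]
  exact Ideal.mul_mem_left _ _
    (add_mem (Ideal.mul_mem_left _ _ hY_mem) hX_mem)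

lemma xiTwo_mem : xiTwo ℚ ∈ ptIdeal ℚ ^ 2 := by
  set u := AddMonoidAlgebra.single ((-1 : ℤ), (-1 : ℤ)) (1 : ℚ) with hu_def
  set a := Xv ℚ - 1 with ha
  set b := Yv ℚ - 1 with hb
  have key : xiTwo ℚ = u * (a ^ 2 + a * b + b ^ 2 + a ^ 2 * b + a * b ^ 2) := by
    unfold xiTwo
    rw [← hu_def, ha, hb]
    linear_combination (3 - Xv ℚ - Yv ℚ) * hu_aux
  rw [key]
  refine Ideal.mul_mem_left _ _ ?_
  refine add_mem (add_mem (add_mem (add_mem ?_ ?_) ?_) ?_) ?_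
  · rw [show a ^ 2 = a * a from sq a]; exact mem_sq hX_mem hX_mem
  · exact mem_sq hX_mem hY_mem
  · rw [show b ^ 2 = b * b from sq b]; exact mem_sq hY_mem hY_mem
  · rw [show a ^ 2 * b = a * (a * b) by ring]
    exact Ideal.mul_mem_left _ _ (mem_sq hX_mem hY_mem)
  · rw [show a * b ^ 2 = b * (a * b) by ring]
    exact Ideal.mul_mem_left _ _ (mem_sq hX_mem hY_mem)

lemma xiB_mem : ∀ n : ℕ, xiB n ∈ ptIdeal ℚ ^ (n + 1)
  | 0 => by simpa [xiB, pow_one] using xiOne_mem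
  | 1 => by simpa [xiB] using xiTwo_mem
  | n + 2 => by
    have h1 := xiB_mem (n + 1)
    have h0 := xiB_mem n
    show (Xv ℚ - 1) * xiB (n + 1) + Xv ℚ * (Yv ℚ - 1) ^ 2 * xiB n ∈ ptIdeal ℚ ^ (n + 3)
    refine add_mem ?_ ?_
    · rw [show n + 3 = 1 + (n + 2) by ring, pow_add, pow_one]
      exact Ideal.mul_mem_mul hX_mem h1
    · have h2 : (Yv ℚ - 1) ^ 2 ∈ ptIdeal ℚ ^ 2 := Ideal.pow_mem_pow hY_mem 2
      have h3 : (Yv ℚ - 1) ^ 2 * xiB n ∈ ptIdeal ℚ ^ (n + 3) := by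
        have := Ideal.mul_mem_mul h2 h0
        rwa [← pow_add, show 2 + (n + 1) = n + 3 by ring] at this
      rw [mul_assoc]
      exact Ideal.mul_mem_left _ _ h3

/-- For every `m ≥ 1`, the Laurent polynomial `ξ_m` of the second family vanishes to
order at least `m` at the point `(1,1)`. -/
theorem stmt18 (m : ℕ) (hm : 1 ≤ m) : xiB (m - 1) ∈ ptIdeal ℚ ^ m := by
  obtain ⟨n, rfl⟩ := Nat.exists_eq_add_of_le hm
  simpa [Nat.add_comm] using xiB_mem n
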